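/- Let μ be a doubled distinct partition with Durfee length D. Then: (a) if 1 ≤ i,j ≤ D, the boxes (i,j) and (j,i) have the same hook length; (b) if 1 ≤ i ≤ D, the hook length of the box (i,i) is twice the hook length of the box (i, D+1); (c) if D+1 ≤ i and 1 ≤ j ≤ D, the boxes (i,j) and (j, i+1) have the same hook length. -/

import Mathlib

open scoped Classical

/-- An integer partition, given by its (0-indexed) sequence of parts. -/
structure IntPartition where
  parts : ℕ → ℕ
  antitone : Antitone parts
  finite_support : (Function.support parts).Finite

namespace IntPartition

/-- The weight `|λ|` of a partition: the sum of its parts. -/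
noncomputable def weight (p : IntPartition) : ℕ := p.finite_support.toFinset.sum p.parts

/-- The conjugate partition, as a function: `conj j` is the number of parts `> j`. -/
noncomputable def conj (p : IntPartition) (j : ℕ) : ℕ := {i | j < p.parts i}.ncard

/-- The cells (boxes) of the Ferrers diagram, 0-indexed. -/
def cells (p : IntPartition) : Set (ℕ × ℕ) := {c | c.2 < p.parts c.1}

lemma cells_finite (p : IntPartition) : p.cells.Finite := by
  have hsub : p.cells ⊆ (Function.support p.parts) ×ˢ (Set.Iio (p.parts 0)) := by
    rintro ⟨i, j⟩ h
    have hj : j < p.parts i := h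
    constructor
    · simp only [Function.mem_support]
      omega
    · exact lt_of_lt_of_le hj (p.antitone (Nat.zero_le i))
  exact (p.finite_support.prod (Set.finite_Iio _)).subset hsub

/-- The cells of the Ferrers diagram as a finset. -/
noncomputable def cellsFinset (p : IntPartition) : Finset (ℕ × ℕ) := p.cells_finite.toFinset

/-- Hook length of the (0-indexed) box `(i,j)`:  `λ_i - j + λ*_j - i - 1` (1-indexed formula). -/
noncomputable def hook (p : IntPartition) (i j : ℕ) : ℕ := p.parts i + p.conj j - i - j - 1

/-- The multiset of hook lengths of all boxes of `p`. -/
noncomputable def hooks (p : IntPartition) : Multiset ℕ :=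
  p.cellsFinset.val.map fun c => p.hook c.1 c.2

/-- The Durfee length: the side of the largest square contained in the diagram. -/
noncomputable def durfee (p : IntPartition) : ℕ := {i | i < p.parts i}.ncard

/-- The sign `δ_λ = (-1)^{D(λ)}`. -/
noncomputable def delta (p : IntPartition) : ℤ := (-1) ^ p.durfee

/-- Self-conjugate partitions: `λ = λ*`. -/
noncomputable def IsSelfConjugate (p : IntPartition) : Prop := ∀ j, p.conj j = p.parts j

/-- Doubled distinct partitions: `λ_i = λ*_i + 1` for `i` in the Durfee square. -/
noncomputable def IsDoubledDistinct (p : IntPartition) : Prop :=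
  ∀ i < p.durfee, p.parts i = p.conj i + 1

/-- `t`-cores: partitions with no hook length divisible by `t`. -/
noncomputable def IsCore (t : ℕ) (p : IntPartition) : Prop := ∀ h ∈ p.hooks, ¬ t ∣ h

/-- The multiset of signed hook lengths `ε_h · h`, where `ε_h = -1` for boxes strictly
above the diagonal and `1` otherwise. -/
noncomputable def signedHooks (p : IntPartition) : Multiset ℤ :=
  p.cellsFinset.val.map fun c => (if c.1 < c.2 then -1 else 1) * (p.hook c.1 c.2 : ℤ)

/-- The multiset of signed hook lengths `ε_h · h` over boxes whose hook length is a
multiple of `t`. -/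
noncomputable def signedHooksT (t : ℕ) (p : IntPartition) : Multiset ℤ :=
  (p.cellsFinset.filter fun c => t ∣ p.hook c.1 c.2).val.map
    fun c => (if c.1 < c.2 then -1 else 1) * (p.hook c.1 c.2 : ℤ)

/-- The multiset of principal hook lengths (hooks of diagonal boxes). -/
noncomputable def principalHooks (p : IntPartition) : Multiset ℕ :=
  (Finset.range p.durfee).val.map fun i => p.hook i i

lemma conj_set_finite (p : IntPartition) (j : ℕ) : {i | j < p.parts i}.Finite := by
  apply p.finite_support.subset
  intro i hi
  simp only [Set.mem_setOf_eq] at hi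
  simp only [Function.mem_support]
  omega

/-- The conjugate partition, as a `Partition`. -/
noncomputable def conjugate (p : IntPartition) : IntPartition where
  parts := p.conj
  antitone := fun a b hab =>
    Set.ncard_le_ncard (fun i hi => lt_of_le_of_lt hab hi) (p.conj_set_finite a)
  finite_support := by
    apply (Set.finite_Iio (p.parts 0)).subset
    intro j hj
    obtain ⟨i, hi⟩ := Set.nonempty_of_ncard_ne_zero hj
    exact lt_of_lt_of_le hi (p.antitone (Nat.zero_le i))

end IntPartition

/-- "Infinite" product `∏_{k ≥ 1} f k` of power series, defined coefficientwise;
this is the honest infinite product whenever `f k ≡ 1 mod X^k`. -/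
noncomputable def Pinf {R : Type*} [CommRing R] (f : ℕ → PowerSeries R) : PowerSeries R :=
  PowerSeries.mk fun n => PowerSeries.coeff n (∏ k ∈ Finset.range (n + 1), f (k + 1))

/-- The Euler-type product `E R m = ∏_{k ≥ 1} (1 - x^{m k}) = (q^m; q^m)_∞`. -/
noncomputable def E (R : Type*) [CommRing R] (m : ℕ) : PowerSeries R :=
  Pinf fun k => 1 - PowerSeries.X ^ (m * k)

/-- The binomial series `(1 - x^m)^a` for an exponent `a` in a binomial ring. -/
noncomputable def binomSeries {R : Type*} [CommRing R] [BinomialRing R] (a : R) (m : ℕ) :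
    PowerSeries R :=
  PowerSeries.mk fun n => if m ∣ n then (-1) ^ (n / m) * Ring.choose a (n / m) else 0

/-- `m` is the position of a vertical step (a `0`) in the canonical bi-infinite binary
word of the partition `p`. -/
def zeroPos (p : IntPartition) (m : ℤ) : Prop := ∃ i : ℕ, (p.parts i : ℤ) - i - 1 = m

/-- The Littlewood decomposition, as a relation: `core` and `quot` are the `t`-core and
`t`-quotient of `lam`, expressed via the binary-word encoding: the `k`-th subsequence of
the word of `lam` is the word of `quot k` (up to the shift `s k`), and the `k`-th
subsequence of the word of `core` is the corresponding flushed word `...000111...` with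
the same charge. -/
def IsLittlewood (t : ℕ) (lam core : IntPartition) (quot : ℕ → IntPartition) : Prop :=
  ∃ s : ℕ → ℤ,
    (∀ k < t, ∀ j : ℤ, zeroPos (quot k) j ↔ zeroPos lam (t * (j + s k) + k)) ∧
    (∀ k < t, ∀ j : ℤ, zeroPos core (t * (j + s k) + k) ↔ j < 0)

namespace IntPartition

lemma ncard_Iio_nat (n : ℕ) : (Set.Iio n).ncard = n := by
  rw [← Finset.coe_range, Set.ncard_coe_finset, Finset.card_range]

lemma lt_conj_iff (p : IntPartition) (i j : ℕ) : i < p.conj j ↔ j < p.parts i := by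
  constructor
  · intro h
    by_contra hij
    push_neg at hij
    have hsub : {k | j < p.parts k} ⊆ Set.Iio i := by
      intro k hk
      simp only [Set.mem_setOf_eq] at hk
      by_contra hk'
      simp only [Set.mem_Iio, not_lt] at hk'
      exact absurd (lt_of_lt_of_le hk (le_trans (p.antitone hk') hij)) (lt_irrefl j)
    have := Set.ncard_le_ncard hsub (Set.finite_Iio i)
    rw [ncard_Iio_nat] at this
    exact absurd h (not_lt.mpr this)
  · intro h
    have hsub : Set.Iio (i + 1) ⊆ {k | j < p.parts k} := by
      intro k hk
      simp only [Set.mem_Iio] at hk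
      exact lt_of_lt_of_le h (p.antitone (Nat.lt_succ_iff.mp hk))
    have := Set.ncard_le_ncard hsub (p.conj_set_finite j)
    rw [ncard_Iio_nat] at this
    exact this

lemma conj_antitone (p : IntPartition) : Antitone p.conj := fun a b hab =>
  Set.ncard_le_ncard (fun i hi => lt_of_le_of_lt hab hi) (p.conj_set_finite a)

lemma durfee_set_finite (p : IntPartition) : {i | i < p.parts i}.Finite := by
  apply p.finite_support.subset
  intro i hi
  simp only [Set.mem_setOf_eq] at hi
  simp only [Function.mem_support]
  omega

lemma lt_durfee_iff (p : IntPartition) (i : ℕ) : i < p.durfee ↔ i < p.parts i := by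
  constructor
  · intro h
    by_contra hij
    push_neg at hij
    have hsub : {k | k < p.parts k} ⊆ Set.Iio i := by
      intro k hk
      simp only [Set.mem_setOf_eq] at hk
      by_contra hk'
      simp only [Set.mem_Iio, not_lt] at hk'
      have := le_trans (p.antitone hk') hij
      omega
    have := Set.ncard_le_ncard hsub (Set.finite_Iio i)
    rw [ncard_Iio_nat] at this
    unfold IntPartition.durfee at h
    omega
  · intro h
    have hsub : Set.Iio (i + 1) ⊆ {k | k < p.parts k} := by
      intro k hk
      simp only [Set.mem_Iio, Set.mem_setOf_eq] at *
      have hk' : k ≤ i := by omega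
      have := p.antitone hk'
      omega
    have := Set.ncard_le_ncard hsub (p.durfee_set_finite)
    rw [ncard_Iio_nat] at this
    exact this

lemma parts_durfee_le (p : IntPartition) : p.parts p.durfee ≤ p.durfee := by
  by_contra h
  push_neg at h
  have := (p.lt_durfee_iff p.durfee).mpr h
  omega

lemma durfee_le_conj (p : IntPartition) {i : ℕ} (hi : i < p.durfee) : p.durfee ≤ p.conj i := by
  have hsub : Set.Iio p.durfee ⊆ {k | i < p.parts k} := by
    intro k hk
    simp only [Set.mem_Iio] at hk
    simp only [Set.mem_setOf_eq]
    have hk2 : k < p.parts k := (p.lt_durfee_iff k).mp hk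
    rcases le_or_gt k i with h | h
    · have := p.antitone h
      have hi2 : i < p.parts i := (p.lt_durfee_iff i).mp hi
      omega
    · omega
  have := Set.ncard_le_ncard hsub (p.conj_set_finite i)
  rw [ncard_Iio_nat] at this
  exact this

lemma conj_durfee_eq (p : IntPartition) (hp : p.IsDoubledDistinct) :
    p.conj p.durfee = p.durfee := by
  have hset : {k | p.durfee < p.parts k} = Set.Iio p.durfee := by
    ext k
    simp only [Set.mem_setOf_eq, Set.mem_Iio]
    constructor
    · intro h
      by_contra hk
      push_neg at hk
      have := le_trans (p.antitone hk) p.parts_durfee_le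
      omega
    · intro h
      have h1 := hp k h
      have h2 := p.durfee_le_conj h
      omega
  unfold IntPartition.conj
  rw [hset, ncard_Iio_nat]

lemma parts_eq_conj_succ (p : IntPartition) (hp : p.IsDoubledDistinct) {i : ℕ}
    (hi : p.durfee ≤ i) : p.parts i = p.conj (i + 1) := by
  have hcd := p.conj_durfee_eq hp
  have h1 : {j | i < p.conj j} = Set.Iio (p.parts i) := by
    ext j
    simp only [Set.mem_setOf_eq, Set.mem_Iio]
    exact p.lt_conj_iff i j
  have h2 : {j | i < p.conj j} = {k | i + 1 < p.parts k} := by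
    ext j
    simp only [Set.mem_setOf_eq]
    constructor
    · intro h
      have hj : j < p.durfee := by
        by_contra hj
        push_neg at hj
        have := p.conj_antitone hj
        omega
      have := hp j hj
      omega
    · intro h
      have hj : j < p.durfee := by
        by_contra hj
        push_neg at hj
        have := le_trans (p.antitone hj) p.parts_durfee_le
        omega
      have := hp j hj
      omega
  have : p.conj (i + 1) = (Set.Iio (p.parts i)).ncard := by
    unfold IntPartition.conj
    rw [← h2, h1]
  rw [this, ncard_Iio_nat]

end IntPartition

theorem dd_hook_symmetries (p : IntPartition) (hp : p.IsDoubledDistinct) :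
    (∀ i j, i < p.durfee → j < p.durfee → p.hook i j = p.hook j i) ∧
    (∀ i < p.durfee, p.hook i i = 2 * p.hook i p.durfee) ∧
    (∀ i j, p.durfee ≤ i → j < p.durfee → (i, j) ∈ p.cells →
      p.hook i j = p.hook j (i + 1)) := by
  refine ⟨?_, ?_, ?_⟩
  · intro i j hi hj
    have h1 := hp i hi
    have h2 := hp j hj
    unfold IntPartition.hook
    omega
  · intro i hi
    have h1 := hp i hi
    have h2 := p.conj_durfee_eq hp
    have h3 := p.durfee_le_conj hi
    unfold IntPartition.hook
    omega
  · intro i j hi hj hc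
    have h1 := hp j hj
    have h2 := p.parts_eq_conj_succ hp hi
    have hcell : j < p.parts i := hc
    have h3 : i < p.conj j := (p.lt_conj_iff i j).mpr hcell
    unfold IntPartition.hook
    omega
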